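/- arXiv:2204.06062 — 2 statements merged into one kernel-verified Lean document; each statement's English description precedes it below -/
import Mathlib

section
/- Let P, Q be pointed polyhedral sets in ℝ^n whose intersection F = P ∩ Q is a common face of both. Then for every p ∈ F, base_P(p) = base_Q(p), where base_R(p) denotes the unique point x in the convex hull of the vertices of R such that p = x + t·y for some t ≥ 0 and unit vector y ∈ char.cone(R) with t minimal. -/
open scoped RealInnerProductSpace
open Set

noncomputable section

abbrev E (n : ℕ) := EuclideanSpace ℝ (Fin n)

/-- A polyhedral set: an intersection of finitely many closed half-spaces. -/
def IsPolyhedral {n : ℕ} (P : Set (E n)) : Prop :=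
  ∃ (m : ℕ) (w : Fin m → E n) (b : Fin m → ℝ),
    P = {x | ∀ i, ⟪w i, x⟫ + b i ≤ 0}

/-- The characteristic (recession) cone of `P`. -/
def charCone {n : ℕ} (P : Set (E n)) : Set (E n) := {y | ∀ x ∈ P, x + y ∈ P}

/-- The lineality space of `P`: `charCone P ∩ (−charCone P)`. -/
def linealitySpace {n : ℕ} (P : Set (E n)) : Set (E n) :=
  charCone P ∩ {y | -y ∈ charCone P}

/-- `P` is pointed if its lineality space is trivial. -/
def IsPointed {n : ℕ} (P : Set (E n)) : Prop := linealitySpace P = {0}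

/-- `(w, b)` determines a supporting hyperplane of `P`. -/
def IsSupporting {n : ℕ} (w : E n) (b : ℝ) (P : Set (E n)) : Prop :=
  w ≠ 0 ∧ (∀ x ∈ P, ⟪w, x⟫ + b ≤ 0) ∧ ∃ x ∈ P, ⟪w, x⟫ + b = 0

/-- A face of a polyhedral set: `∅`, `P` itself, or the intersection of `P` with a
supporting hyperplane. -/
def IsFace {n : ℕ} (P F : Set (E n)) : Prop :=
  F = ∅ ∨ F = P ∨ ∃ w b, IsSupporting w b P ∧ F = {x ∈ P | ⟪w, x⟫ + b = 0}

/-- A vertex (0-dimensional face) of `P`. -/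
def IsVertex {n : ℕ} (P : Set (E n)) (v : E n) : Prop := IsFace P {v}

/-- `K_P`: the convex hull of the vertices of `P`. -/
def Kpart {n : ℕ} (P : Set (E n)) : Set (E n) := convexHull ℝ {v | IsVertex P v}

/-- The set of admissible distances from `K_P` to `p` along unit directions of the
characteristic cone. -/
def deltaSet {n : ℕ} (P : Set (E n)) (p : E n) : Set ℝ :=
  {t : ℝ | 0 ≤ t ∧ ∃ x ∈ Kpart P, ∃ y ∈ charCone P, ‖y‖ = 1 ∧ p = x + t • y}

/-- `δ_P(p)`: the minimal distance from `K_P` to `p` along directions in the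
characteristic cone. -/
def delta {n : ℕ} (P : Set (E n)) (p : E n) : ℝ := sInf (deltaSet P p)

/-! ### Auxiliary lemmas -/

section Aux

variable {n : ℕ}

lemma arch_nonpos {a d : ℝ} (h : ∀ k : ℕ, a + k * d ≤ 0) : d ≤ 0 := by
  by_contra hd
  push_neg at hd
  obtain ⟨k, hk⟩ := exists_nat_gt ((-a) / d)
  have h1 : -a < k * d := (div_lt_iff₀ hd).mp hk
  have := h k
  linarith

lemma add_nsmul_mem_of_charCone {S : Set (E n)} {y : E n} (hy : y ∈ charCone S) :
    ∀ x ∈ S, ∀ k : ℕ, x + (k : ℝ) • y ∈ S := by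
  intro x hx k
  induction k with
  | zero => simpa using hx
  | succ k ih =>
      have he : x + ((k + 1 : ℕ) : ℝ) • y = (x + (k : ℝ) • y) + y := by
        push_cast
        rw [add_smul, one_smul]
        abel
      rw [he]
      exact hy _ ih

lemma inner_nonpos_of_charCone {S : Set (E n)} {u x₀ y : E n} {c : ℝ}
    (hS : ∀ x ∈ S, ⟪u, x⟫ + c ≤ 0) (hx₀ : x₀ ∈ S) (hy : y ∈ charCone S) :
    ⟪u, y⟫ ≤ 0 := by
  apply arch_nonpos (a := ⟪u, x₀⟫ + c)
  intro k
  have h1 := hS _ (add_nsmul_mem_of_charCone hy x₀ hx₀ k)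
  rw [inner_add_right, real_inner_smul_right] at h1
  linarith

lemma mem_charCone_iff {m : ℕ} {w : Fin m → E n} {b : Fin m → ℝ} {P : Set (E n)}
    (hrep : P = {x | ∀ i, ⟪w i, x⟫ + b i ≤ 0}) {x₀ : E n} (hx₀ : x₀ ∈ P) (y : E n) :
    y ∈ charCone P ↔ ∀ i, ⟪w i, y⟫ ≤ 0 := by
  constructor
  · intro hy i
    exact inner_nonpos_of_charCone (c := b i)
      (fun x hx => by rw [hrep] at hx; exact hx i) hx₀ hy
  · intro h x hx
    rw [hrep] at hx ⊢
    intro i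
    have h1 := hx i
    have h2 := h i
    simp only [mem_setOf_eq, inner_add_right]
    linarith

lemma ray_mem_charCone {m : ℕ} {w : Fin m → E n} {b : Fin m → ℝ} {P : Set (E n)}
    (hrep : P = {x | ∀ i, ⟪w i, x⟫ + b i ≤ 0}) {x y : E n}
    (h : ∀ s : ℝ, 0 ≤ s → x + s • y ∈ P) : y ∈ charCone P := by
  have hx : x ∈ P := by simpa using h 0 le_rfl
  rw [mem_charCone_iff hrep hx]
  intro i
  apply arch_nonpos (a := ⟪w i, x⟫ + b i)
  intro k
  have h1 := h k (by positivity)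
  rw [hrep] at h1
  have h2 := h1 i
  rw [inner_add_right, real_inner_smul_right] at h2
  linarith

lemma polyhedral_convex {m : ℕ} {w : Fin m → E n} {b : Fin m → ℝ} {P : Set (E n)}
    (hrep : P = {x | ∀ i, ⟪w i, x⟫ + b i ≤ 0}) : Convex ℝ P := by
  rw [hrep]
  intro x hx y hy a c ha hc hac
  intro i
  have h1 := hx i
  have h2 := hy i
  have hc1 : c = 1 - a := by linarith
  subst hc1
  simp only [mem_setOf_eq, inner_add_right, real_inner_smul_right]
  nlinarith [mul_le_mul_of_nonneg_left h1 ha, mul_le_mul_of_nonneg_left h2 hc]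

lemma vertex_mem {P : Set (E n)} {v : E n} (hv : IsVertex P v) : v ∈ P := by
  rcases hv with h | h | ⟨w, c, _, h⟩
  · exact absurd h (singleton_ne_empty v)
  · rw [← h]; exact mem_singleton v
  · have hv' : v ∈ ({v} : Set (E n)) := mem_singleton v
    rw [h] at hv'
    exact hv'.1

lemma Kpart_subset {m : ℕ} {w : Fin m → E n} {b : Fin m → ℝ} {P : Set (E n)}
    (hrep : P = {x | ∀ i, ⟪w i, x⟫ + b i ≤ 0}) : Kpart P ⊆ P :=
  convexHull_min (fun _ hv => vertex_mem hv) (polyhedral_convex hrep)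

lemma face_extreme {R F : Set (E n)} (hF : IsFace R F) {a b z : E n} {l : ℝ}
    (ha : a ∈ R) (hb : b ∈ R) (hz : z ∈ F) (hl0 : 0 < l) (hl1 : l < 1)
    (hzc : z = l • a + (1 - l) • b) : a ∈ F ∧ b ∈ F := by
  rcases hF with h | h | ⟨w, c, ⟨_, hle, _⟩, h⟩
  · rw [h] at hz; exact absurd hz (notMem_empty z)
  · subst h; exact ⟨ha, hb⟩
  · subst h
    obtain ⟨hzR, hze⟩ := hz
    have h1 := hle a ha
    have h2 := hle b hb
    have hza : ⟪w, z⟫ = l * ⟪w, a⟫ + (1 - l) * ⟪w, b⟫ := by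
      rw [hzc, inner_add_right, real_inner_smul_right, real_inner_smul_right]
    have key : l * (⟪w, a⟫ + c) + (1 - l) * (⟪w, b⟫ + c) = 0 := by
      linear_combination hze - hza
    have ea : ⟪w, a⟫ + c = 0 := by nlinarith
    have eb : ⟪w, b⟫ + c = 0 := by nlinarith
    exact ⟨⟨ha, ea⟩, ⟨hb, eb⟩⟩

lemma face_ray {m : ℕ} {w : Fin m → E n} {b : Fin m → ℝ} {R F : Set (E n)}
    (hrep : R = {x | ∀ i, ⟪w i, x⟫ + b i ≤ 0}) (hF : IsFace R F)
    {p x y : E n} {t : ℝ} (hpF : p ∈ F) (hx : x ∈ R) (hy : y ∈ charCone R)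
    (ht : 0 < t) (hpe : p = x + t • y) :
    ∀ s : ℝ, 0 ≤ s → x + s • y ∈ F := by
  have hray : ∀ s : ℝ, 0 ≤ s → x + s • y ∈ R := by
    intro s hs
    have hyc := (mem_charCone_iff hrep hx y).mp hy
    rw [hrep] at hx ⊢
    intro i
    have h1 := hx i
    have h2 := hyc i
    simp only [mem_setOf_eq, inner_add_right, real_inner_smul_right]
    nlinarith [mul_nonpos_of_nonneg_of_nonpos hs h2]
  rcases hF with h | h | ⟨u, c, ⟨_, hle, _⟩, h⟩
  · rw [h] at hpF; exact absurd hpF (notMem_empty p)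
  · subst h; exact hray
  · subst h
    have hyu : ⟪u, y⟫ ≤ 0 := inner_nonpos_of_charCone hle hx hy
    have hxu : ⟪u, x⟫ + c ≤ 0 := hle x hx
    have hpu : ⟪u, p⟫ + c = 0 := hpF.2
    have hpe' : ⟪u, p⟫ = ⟪u, x⟫ + t * ⟪u, y⟫ := by
      rw [hpe, inner_add_right, real_inner_smul_right]
    have h5 : t * ⟪u, y⟫ ≤ 0 := mul_nonpos_of_nonneg_of_nonpos ht.le hyu
    have h6 : t * ⟪u, y⟫ = 0 := le_antisymm h5 (by linarith)
    have hyu0 : ⟪u, y⟫ = 0 := by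
      rcases mul_eq_zero.mp h6 with h | h
      · exact absurd h (ne_of_gt ht)
      · exact h
    intro s hs
    refine ⟨hray s hs, ?_⟩
    rw [inner_add_right, real_inner_smul_right, hyu0]
    linarith

lemma extreme_point_is_vertex {m : ℕ} {w : Fin m → E n} {b : Fin m → ℝ} {P : Set (E n)}
    (hrep : P = {x | ∀ i, ⟪w i, x⟫ + b i ≤ 0}) {v : E n} (hv : v ∈ P)
    (hE : ∀ a ∈ P, ∀ b' ∈ P, ∀ l : ℝ, 0 < l → l < 1 →
      v = l • a + (1 - l) • b' → a = v ∧ b' = v) :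
    IsVertex P v := by
  classical
  set I : Finset (Fin m) := Finset.univ.filter (fun i => ⟪w i, v⟫ + b i = 0) with hI
  have hvP : ∀ i, ⟪w i, v⟫ + b i ≤ 0 := by rw [hrep] at hv; exact hv
  -- every point of P tight on all of I equals v
  have hS : ∀ x ∈ P, (∀ i ∈ I, ⟪w i, x⟫ + b i = 0) → x = v := by
    intro x hxP hxI
    have hxP' : ∀ i, ⟪w i, x⟫ + b i ≤ 0 := by rw [hrep] at hxP; exact hxP
    obtain ⟨s, hs0, hs⟩ : ∃ s : ℝ, 0 < s ∧ ∀ i, ⟪w i, v⟫ + b i + s * ⟪w i, v - x⟫ ≤ 0 := by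
      set J : Finset (Fin m) :=
        Finset.univ.filter (fun i => 0 < ⟪w i, v - x⟫ ∧ i ∉ I) with hJ
      set g : Fin m → ℝ := fun i => (-(⟪w i, v⟫ + b i)) / (2 * ⟪w i, v - x⟫) with hg
      set T : Finset ℝ := insert (1 : ℝ) (J.image g) with hT
      have hTne : T.Nonempty := Finset.insert_nonempty _ _
      have hci' : ∀ i, i ∉ I → ⟪w i, v⟫ + b i < 0 := by
        intro i hiI
        exact lt_of_le_of_ne (hvP i)
          (fun h' => hiI (Finset.mem_filter.mpr ⟨Finset.mem_univ i, h'⟩))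
      have hTpos : ∀ u ∈ T, 0 < u := by
        intro u hu
        rw [hT, Finset.mem_insert] at hu
        rcases hu with h | h
        · rw [h]; norm_num
        · obtain ⟨i, hiJ, hgi⟩ := Finset.mem_image.mp h
          rw [hJ, Finset.mem_filter] at hiJ
          obtain ⟨-, hdi, hiI⟩ := hiJ
          have hci := hci' i hiI
          rw [← hgi]
          simp only [hg]
          apply div_pos (by linarith) (by linarith)
      have hs0 : 0 < T.min' hTne := hTpos _ (T.min'_mem hTne)
      refine ⟨T.min' hTne, hs0, ?_⟩
      intro i
      by_cases hiI : i ∈ I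
      · have h1 : ⟪w i, v⟫ + b i = 0 := by
          rw [hI, Finset.mem_filter] at hiI; exact hiI.2
        have h2 : ⟪w i, v - x⟫ = 0 := by
          rw [inner_sub_right]
          have := hxI i hiI
          linarith
        rw [h1, h2]
        simp
      · have hci : ⟪w i, v⟫ + b i < 0 := hci' i hiI
        by_cases hdi : 0 < ⟪w i, v - x⟫
        · have hiJ : i ∈ J := by
            rw [hJ, Finset.mem_filter]; exact ⟨Finset.mem_univ i, hdi, hiI⟩
          have hle : T.min' hTne ≤ g i :=
            Finset.min'_le _ _
              (by rw [hT]; exact Finset.mem_insert_of_mem (Finset.mem_image_of_mem g hiJ))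
          have hgi : g i * ⟪w i, v - x⟫ = (-(⟪w i, v⟫ + b i)) / 2 := by
            simp only [hg]
            rw [div_mul_eq_mul_div, mul_div_mul_right _ _ (ne_of_gt hdi)]
          nlinarith [mul_le_mul_of_nonneg_right hle hdi.le]
        · push_neg at hdi
          nlinarith [mul_nonpos_of_nonneg_of_nonpos hs0.le hdi]
    by_contra hne
    have hv' : v + s • (v - x) ∈ P := by
      rw [hrep]
      intro i
      have := hs i
      simp only [mem_setOf_eq, inner_add_right, real_inner_smul_right]
      linarith
    have h1s : (0:ℝ) < 1 + s := by linarith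
    have hl0 : 0 < 1 / (1 + s) := by positivity
    have hl1 : 1 / (1 + s) < 1 := by
      rw [div_lt_one h1s]; linarith
    have hcomb : v = (1 / (1 + s)) • (v + s • (v - x)) + (1 - 1 / (1 + s)) • x := by
      have h1s' : (1:ℝ) + s ≠ 0 := ne_of_gt h1s
      match_scalars <;> field_simp <;> ring
    have := hE _ hv' x hxP (1 / (1 + s)) hl0 hl1 hcomb
    exact hne this.2
  -- the sum functional
  set W : E n := ∑ i ∈ I, w i with hW
  set B : ℝ := ∑ i ∈ I, b i with hB
  have hWx : ∀ x : E n, ⟪W, x⟫ + B = ∑ i ∈ I, (⟪w i, x⟫ + b i) := by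
    intro x
    rw [hW, hB, sum_inner, Finset.sum_add_distrib]
  have hvW : ⟪W, v⟫ + B = 0 := by
    rw [hWx]
    exact Finset.sum_eq_zero (fun i hi => by rw [hI, Finset.mem_filter] at hi; exact hi.2)
  have hle : ∀ x ∈ P, ⟪W, x⟫ + B ≤ 0 := by
    intro x hx
    rw [hWx]
    apply Finset.sum_nonpos
    intro i _
    rw [hrep] at hx
    exact hx i
  have hcontact : ∀ x ∈ P, ⟪W, x⟫ + B = 0 → x = v := by
    intro x hx he
    apply hS x hx
    intro i hi
    have hnonpos : ∀ j ∈ I, ⟪w j, x⟫ + b j ≤ 0 := by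
      intro j _
      rw [hrep] at hx
      exact hx j
    have hsz : ∑ j ∈ I, (⟪w j, x⟫ + b j) = 0 := by rw [← hWx]; exact he
    exact (Finset.sum_eq_zero_iff_of_nonpos hnonpos).mp hsz i hi
  by_cases hW0 : W = 0
  · -- P = {v}
    refine Or.inr (Or.inl ?_)
    have hB0 : B = 0 := by
      have h' := hvW
      rw [hW0, inner_zero_left, zero_add] at h'
      exact h'
    apply Subset.antisymm (singleton_subset_iff.mpr hv)
    intro x hx
    rw [mem_singleton_iff]
    exact hcontact x hx (by rw [hW0, inner_zero_left, hB0]; ring)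
  · refine Or.inr (Or.inr ⟨W, B, ⟨hW0, hle, v, hv, hvW⟩, ?_⟩)
    apply Subset.antisymm
    · intro x hx
      rw [mem_singleton_iff] at hx
      subst hx
      exact ⟨hv, hvW⟩
    · intro x hx
      rw [mem_singleton_iff]
      exact hcontact x hx.1 hx.2

lemma hull_face {Q F V : Set (E n)} (hF : IsFace Q F) (hV : V ⊆ Q)
    {x : E n} (hx : x ∈ convexHull ℝ V) (hxF : x ∈ F) :
    x ∈ convexHull ℝ (V ∩ F) := by
  classical
  rcases hF with h | h | ⟨u, c, ⟨_, hle, _⟩, h⟩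
  · rw [h] at hxF; exact absurd hxF (notMem_empty x)
  · subst h
    rwa [inter_eq_self_of_subset_left hV]
  · subst h
    rw [convexHull_eq] at hx
    obtain ⟨ι, t, wt, z, hw0, hw1, hz, hxc⟩ := hx
    have hxs : x = ∑ i ∈ t, wt i • z i := by
      rw [← hxc, Finset.centerMass_eq_of_sum_1 _ _ hw1]
    have hxe : ⟪u, x⟫ + c = 0 := hxF.2
    have hsum : ∑ i ∈ t, wt i * (⟪u, z i⟫ + c) = 0 := by
      have h1 : ∑ i ∈ t, wt i * (⟪u, z i⟫ + c)
          = (∑ i ∈ t, wt i * ⟪u, z i⟫) + (∑ i ∈ t, wt i) * c := by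
        rw [Finset.sum_mul]
        rw [← Finset.sum_add_distrib]
        congr 1
        ext i
        ring
      rw [h1, hw1, one_mul]
      have h2 : ⟪u, x⟫ = ∑ i ∈ t, wt i * ⟪u, z i⟫ := by
        rw [hxs, inner_sum]
        congr 1
        ext i
        rw [real_inner_smul_right]
      linarith
    have hterms : ∀ i ∈ t, wt i * (⟪u, z i⟫ + c) ≤ 0 := fun i hi =>
      mul_nonpos_of_nonneg_of_nonpos (hw0 i hi) (hle _ (hV (hz i hi)))
    have hzero := (Finset.sum_eq_zero_iff_of_nonpos hterms).mp hsum
    rw [← hxc, ← Finset.centerMass_filter_ne_zero (w := wt)]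
    apply Finset.centerMass_mem_convexHull
    · intro i hi
      exact hw0 i (Finset.mem_filter.mp hi).1
    · rw [Finset.sum_filter_ne_zero, hw1]
      norm_num
    · intro i hi
      obtain ⟨hit, hwne⟩ := Finset.mem_filter.mp hi
      refine ⟨hz i hit, hV (hz i hit), ?_⟩
      have := hzero i hit
      rcases mul_eq_zero.mp this with h' | h'
      · exact absurd h' hwne
      · exact h'

lemma delta_nonneg {P : Set (E n)} {p : E n} : 0 ≤ delta P p := by
  rcases eq_empty_or_nonempty (deltaSet P p) with h | h
  · rw [delta, h, Real.sInf_empty]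
  · exact le_csInf h (fun t ht => ht.1)

lemma delta_le {P : Set (E n)} {p : E n} {t : ℝ} (h : t ∈ deltaSet P p) : delta P p ≤ t :=
  csInf_le ⟨0, fun r hr => hr.1⟩ h

end Aux

/-- If two pointed polyhedral sets intersect in a common face F, their base maps
agree at every point of F. -/
theorem base_eq_on_common_face {n : ℕ} (Pset Qset : Set (E n))
    (hP : IsPolyhedral Pset) (hQ : IsPolyhedral Qset)
    (hPptd : IsPointed Pset) (hQptd : IsPointed Qset)
    (hFP : IsFace Pset (Pset ∩ Qset)) (hFQ : IsFace Qset (Pset ∩ Qset))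
    (p : E n) (hp : p ∈ Pset ∩ Qset) :
    ∀ x₁ ∈ Kpart Pset, ∀ x₂ ∈ Kpart Qset,
      (∃ y ∈ charCone Pset, ‖y‖ = 1 ∧ p = x₁ + delta Pset p • y) →
      (∃ y ∈ charCone Qset, ‖y‖ = 1 ∧ p = x₂ + delta Qset p • y) →
      x₁ = x₂ := by
  obtain ⟨mP, wP, bP, hrepP⟩ := hP
  obtain ⟨mQ, wQ, bQ, hrepQ⟩ := hQ
  obtain ⟨hpP, hpQ⟩ := hp
  rintro x₁ hx₁ x₂ hx₂ ⟨y₁, hy₁, hy₁n, hpe₁⟩ ⟨y₂, hy₂, hy₂n, hpe₂⟩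
  set t₁ := delta Pset p with ht₁d
  set t₂ := delta Qset p with ht₂d
  have ht₁0 : 0 ≤ t₁ := delta_nonneg
  have ht₂0 : 0 ≤ t₂ := delta_nonneg
  have hx₁P : x₁ ∈ Pset := Kpart_subset hrepP hx₁
  have hx₂Q : x₂ ∈ Qset := Kpart_subset hrepQ hx₂
  -- x₁ and x₂ belong to the common face F = Pset ∩ Qset
  have hx₁F : x₁ ∈ Pset ∩ Qset := by
    rcases eq_or_lt_of_le ht₁0 with h0 | hpos
    · have : p = x₁ := by rw [hpe₁, ← h0, zero_smul, add_zero]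
      rw [← this]; exact ⟨hpP, hpQ⟩
    · simpa using face_ray hrepP hFP ⟨hpP, hpQ⟩ hx₁P hy₁ hpos hpe₁ 0 le_rfl
  have hx₂F : x₂ ∈ Pset ∩ Qset := by
    rcases eq_or_lt_of_le ht₂0 with h0 | hpos
    · have : p = x₂ := by rw [hpe₂, ← h0, zero_smul, add_zero]
      rw [← this]; exact ⟨hpP, hpQ⟩
    · simpa using face_ray hrepQ hFQ ⟨hpP, hpQ⟩ hx₂Q hy₂ hpos hpe₂ 0 le_rfl
  -- transfer of Kpart membership
  have hx₂KP : x₂ ∈ Kpart Pset := by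
    have h1 : x₂ ∈ convexHull ℝ ({v | IsVertex Qset v} ∩ (Pset ∩ Qset)) :=
      hull_face hFQ (fun v hv => vertex_mem hv) hx₂ hx₂F
    refine convexHull_mono ?_ h1
    rintro v ⟨hvQ, hvF⟩
    have hvP : v ∈ Pset := hvF.1
    apply extreme_point_is_vertex hrepP hvP
    intro a ha b' hb' l hl0 hl1 hcomb
    have h2 := face_extreme hFP ha hb' hvF hl0 hl1 hcomb
    have h3 := face_extreme hvQ h2.1.2 h2.2.2 (mem_singleton v) hl0 hl1 hcomb
    exact ⟨h3.1, h3.2⟩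
  have hx₁KQ : x₁ ∈ Kpart Qset := by
    have h1 : x₁ ∈ convexHull ℝ ({v | IsVertex Pset v} ∩ (Pset ∩ Qset)) :=
      hull_face hFP (fun v hv => vertex_mem hv) hx₁ hx₁F
    refine convexHull_mono ?_ h1
    rintro v ⟨hvP, hvF⟩
    have hvQ : v ∈ Qset := hvF.2
    apply extreme_point_is_vertex hrepQ hvQ
    intro a ha b' hb' l hl0 hl1 hcomb
    have h2 := face_extreme hFQ ha hb' hvF hl0 hl1 hcomb
    have h3 := face_extreme hvP h2.1.1 h2.2.1 (mem_singleton v) hl0 hl1 hcomb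
    exact ⟨h3.1, h3.2⟩
  -- degenerate cases
  by_cases h₂0 : t₂ = 0
  · have hpx₂ : p = x₂ := by rw [hpe₂, h₂0, zero_smul, add_zero]
    have h0mem : (0 : ℝ) ∈ deltaSet Pset p :=
      ⟨le_rfl, x₂, hx₂KP, y₁, hy₁, hy₁n, by rw [zero_smul, add_zero, hpx₂]⟩
    have ht₁z : t₁ = 0 := le_antisymm (delta_le h0mem) ht₁0
    have hpx₁ : p = x₁ := by rw [hpe₁, ht₁z, zero_smul, add_zero]
    rw [← hpx₁, ← hpx₂]
  by_cases h₁0 : t₁ = 0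
  · have hpx₁ : p = x₁ := by rw [hpe₁, h₁0, zero_smul, add_zero]
    have h0mem : (0 : ℝ) ∈ deltaSet Qset p :=
      ⟨le_rfl, x₁, hx₁KQ, y₂, hy₂, hy₂n, by rw [zero_smul, add_zero, hpx₁]⟩
    have ht₂z : t₂ = 0 := le_antisymm (delta_le h0mem) ht₂0
    exact absurd ht₂z h₂0
  have ht₁p : 0 < t₁ := lt_of_le_of_ne ht₁0 (Ne.symm h₁0)
  have ht₂p : 0 < t₂ := lt_of_le_of_ne ht₂0 (Ne.symm h₂0)
  -- rays stay in the face, so directions belong to both characteristic cones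
  have hray₂ := face_ray hrepQ hFQ ⟨hpP, hpQ⟩ hx₂Q hy₂ ht₂p hpe₂
  have hy₂P : y₂ ∈ charCone Pset :=
    ray_mem_charCone hrepP (fun s hs => (hray₂ s hs).1)
  have hray₁ := face_ray hrepP hFP ⟨hpP, hpQ⟩ hx₁P hy₁ ht₁p hpe₁
  have hy₁Q : y₁ ∈ charCone Qset :=
    ray_mem_charCone hrepQ (fun s hs => (hray₁ s hs).2)
  -- the two deltas agree
  have h12 : t₁ ≤ t₂ := delta_le ⟨ht₂0, x₂, hx₂KP, y₂, hy₂P, hy₂n, hpe₂⟩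
  have h21 : t₂ ≤ t₁ := delta_le ⟨ht₁0, x₁, hx₁KQ, y₁, hy₁Q, hy₁n, hpe₁⟩
  have htt : t₂ = t₁ := le_antisymm h21 h12
  rw [htt] at hpe₂
  -- uniqueness of the minimizer within Pset
  by_cases hyy : y₁ = y₂
  · rw [hyy] at hpe₁
    have := hpe₁.symm.trans hpe₂
    exact add_right_cancel this
  · exfalso
    set ybar : E n := (2 : ℝ)⁻¹ • (y₁ + y₂) with hybar
    set xbar : E n := (2 : ℝ)⁻¹ • (x₁ + x₂) with hxbar
    have hpbar : p = xbar + t₁ • ybar := by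
      have key : xbar + t₁ • ybar = (2 : ℝ)⁻¹ • ((x₁ + t₁ • y₁) + (x₂ + t₁ • y₂)) := by
        rw [hxbar, hybar]; module
      rw [key, ← hpe₁, ← hpe₂]
      module
    have hxbarK : xbar ∈ Kpart Pset := by
      have hconv : Convex ℝ (Kpart Pset) := convex_convexHull ℝ _
      have := hconv hx₁ hx₂KP (by norm_num : (0:ℝ) ≤ 2⁻¹) (by norm_num : (0:ℝ) ≤ 2⁻¹)
        (by norm_num)
      rw [hxbar, smul_add]
      exact this
    have hybarC : ybar ∈ charCone Pset := by
      rw [mem_charCone_iff hrepP hx₁P] at hy₁ hy₂P ⊢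
      intro i
      have h1 := hy₁ i
      have h2 := hy₂P i
      rw [hybar, real_inner_smul_right, inner_add_right]
      nlinarith
    have hnle : ‖ybar‖ ≤ 1 := by
      rw [hybar]
      calc ‖(2:ℝ)⁻¹ • (y₁ + y₂)‖ = (2:ℝ)⁻¹ * ‖y₁ + y₂‖ := by
            rw [norm_smul]; norm_num
        _ ≤ (2:ℝ)⁻¹ * (‖y₁‖ + ‖y₂‖) := by
            have := norm_add_le y₁ y₂
            nlinarith
        _ = 1 := by rw [hy₁n, hy₂n]; norm_num
    have hnne : ‖ybar‖ ≠ 1 := by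
      intro h1
      apply hyy
      have h2 : ‖y₁ + y₂‖ = 2 := by
        have : ‖ybar‖ = (2:ℝ)⁻¹ * ‖y₁ + y₂‖ := by
          rw [hybar, norm_smul]; norm_num
        rw [this] at h1
        linarith
      have h3 : ⟪y₁, y₂⟫ = 1 := by
        have h4 : ‖y₁ + y₂‖ ^ 2 = ‖y₁‖ ^ 2 + 2 * ⟪y₁, y₂⟫ + ‖y₂‖ ^ 2 :=
          norm_add_sq_real y₁ y₂
        rw [h2, hy₁n, hy₂n] at h4
        linarith
      have h5 : ‖y₁ - y₂‖ ^ 2 = 0 := by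
        have h6 : ‖y₁ - y₂‖ ^ 2 = ‖y₁‖ ^ 2 - 2 * ⟪y₁, y₂⟫ + ‖y₂‖ ^ 2 :=
          norm_sub_sq_real y₁ y₂
        rw [h3, hy₁n, hy₂n] at h6
        linarith
      have : y₁ - y₂ = 0 := by
        have := pow_eq_zero_iff (n := 2) (by norm_num) |>.mp h5
        exact norm_eq_zero.mp this
      exact sub_eq_zero.mp this
    by_cases hyz : ybar = 0
    · -- y₂ = -y₁ forces y₁ = 0 by pointedness
      have hsum : y₁ + y₂ = 0 := by
        have : (2:ℝ) • ybar = y₁ + y₂ := by rw [hybar]; module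
        rw [hyz, smul_zero] at this
        exact this.symm
      have hneg : -y₁ = y₂ := by
        rw [← zero_sub, ← hsum]; abel
      have hlin : y₁ ∈ linealitySpace Pset := ⟨hy₁, by rw [mem_setOf_eq, hneg]; exact hy₂P⟩
      rw [hPptd] at hlin
      rw [mem_singleton_iff] at hlin
      rw [hlin, norm_zero] at hy₁n
      norm_num at hy₁n
    · have hr0 : 0 < ‖ybar‖ := norm_pos_iff.mpr hyz
      have hrlt : ‖ybar‖ < 1 := lt_of_le_of_ne hnle hnne
      set r : ℝ := ‖ybar‖ with hr
      set y' : E n := r⁻¹ • ybar with hy'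
      have hy'C : y' ∈ charCone Pset := by
        rw [mem_charCone_iff hrepP hx₁P] at hybarC ⊢
        intro i
        have h1 := hybarC i
        rw [hy', real_inner_smul_right]
        have : (0:ℝ) ≤ r⁻¹ := by positivity
        exact mul_nonpos_of_nonneg_of_nonpos this h1
      have hy'n : ‖y'‖ = 1 := by
        rw [hy', norm_smul, norm_inv, norm_norm, ← hr]
        field_simp
      have hpe' : p = xbar + (t₁ * r) • y' := by
        have hrr : (t₁ * r) • y' = t₁ • ybar := by
          rw [hy', smul_smul, mul_assoc, mul_inv_cancel₀ (ne_of_gt hr0), mul_one]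
        rw [hpbar, hrr]
      have hmem : t₁ * r ∈ deltaSet Pset p :=
        ⟨by positivity, xbar, hxbarK, y', hy'C, hy'n, hpe'⟩
      have := delta_le hmem
      nlinarith
end
end

section
/- Let 𝒞 be a polyhedral complex in ℝ^n in which all cells are pointed. Then the compact part com.part(𝒞) = ∪_{C ∈ 𝒞} (faces of K_C), where K_C is the convex hull of the vertices of C, is a polytopal complex: every face of each of its polytopes belongs to it, and the intersection of any two of its polytopes is a face of both. -/
open scoped RealInnerProductSpace
open Set

noncomputable section

/-- A polyhedral complex in ℝⁿ: a finite family of nonempty polyhedral sets, closed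
under taking (nonempty) faces, in which any two cells intersect in a common face. -/
def IsPolyComplex {n : ℕ} (cells : Set (Set (E n))) : Prop :=
  cells.Finite ∧
  (∀ C ∈ cells, IsPolyhedral C ∧ C.Nonempty) ∧
  (∀ C ∈ cells, ∀ F, IsFace C F → F.Nonempty → F ∈ cells) ∧
  (∀ C ∈ cells, ∀ D ∈ cells, IsFace C (C ∩ D) ∧ IsFace D (C ∩ D))

/-- The cells of the compact part: all faces of the polytopes K_C, C a cell. -/
def compactPartCells {n : ℕ} (cells : Set (Set (E n))) : Set (Set (E n)) :=
  {A | A.Nonempty ∧ ∃ C ∈ cells, IsFace (Kpart C) A}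


section Basic
variable {n : ℕ}

lemma affmap_convex (w : E n) (b : ℝ) : Convex ℝ {x : E n | ⟪w, x⟫ + b ≤ 0} := by
  have : {x : E n | ⟪w, x⟫ + b ≤ 0} = {x : E n | ⟪w, x⟫ ≤ -b} := by
    ext x; simp [le_neg_iff_add_nonpos_left]; constructor <;> intro h <;> linarith
  rw [this]
  exact convex_halfSpace_le ⟨fun x y => inner_add_right w x y, fun c x => real_inner_smul_right w x c⟩ _

lemma hyperplane_convex (w : E n) (b : ℝ) : Convex ℝ {x : E n | ⟪w, x⟫ + b = 0} := by
  have : {x : E n | ⟪w, x⟫ + b = 0} = {x : E n | ⟪w, x⟫ = -b} := by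
    ext x; constructor <;> intro h <;> simp at * <;> linarith
  rw [this]
  exact convex_hyperplane ⟨fun x y => inner_add_right w x y, fun c x => real_inner_smul_right w x c⟩ _

lemma IsPolyhedral.convex {P : Set (E n)} (h : IsPolyhedral P) : Convex ℝ P := by
  obtain ⟨m, w, b, rfl⟩ := h
  have : {x : E n | ∀ i, ⟪w i, x⟫ + b i ≤ 0} = ⋂ i, {x : E n | ⟪w i, x⟫ + b i ≤ 0} := by
    ext x; simp
  rw [this]
  exact convex_iInter fun i => affmap_convex _ _

lemma IsFace.subset {P F : Set (E n)} (h : IsFace P F) : F ⊆ P := by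
  rcases h with rfl | rfl | ⟨w, b, _, rfl⟩
  · exact empty_subset _
  · exact subset_rfl
  · exact sep_subset _ _

lemma IsFace.convex {P F : Set (E n)} (hP : Convex ℝ P) (h : IsFace P F) : Convex ℝ F := by
  rcases h with rfl | rfl | ⟨w, b, _, rfl⟩
  · exact convex_empty
  · exact hP
  · exact hP.inter (hyperplane_convex w b)

/-- The zero set of any affine functional that is `≤ 0` on `A` is a face of `A`. -/
lemma isFace_of_le {A : Set (E n)} (w : E n) (b : ℝ) (h : ∀ x ∈ A, ⟪w, x⟫ + b ≤ 0) :
    IsFace A {x ∈ A | ⟪w, x⟫ + b = 0} := by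
  by_cases hne : ∃ x ∈ A, ⟪w, x⟫ + b = 0
  · by_cases hw : w = 0
    · subst hw
      obtain ⟨x, hx, hxe⟩ := hne
      simp only [inner_zero_left, zero_add] at hxe
      subst hxe
      right; left
      ext y; simp [inner_zero_left]
    · right; right; exact ⟨w, b, ⟨hw, h, hne⟩, rfl⟩
  · left
    push_neg at hne
    ext x; simp only [mem_setOf_eq, mem_empty_iff_false, iff_false, not_and]
    exact fun hx => hne x hx

/-- An affine functional nonpositive on `S` is nonpositive on its convex hull. -/
lemma hull_le {S : Set (E n)} {w : E n} {b : ℝ} (h : ∀ s ∈ S, ⟪w, s⟫ + b ≤ 0) :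
    ∀ x ∈ convexHull ℝ S, ⟪w, x⟫ + b ≤ 0 := by
  intro x hx
  have : convexHull ℝ S ⊆ {x : E n | ⟪w, x⟫ + b ≤ 0} :=
    convexHull_min (fun s hs => h s hs) (affmap_convex w b)
  exact this hx

/-- Points of the hull where a supporting functional vanishes lie in the hull of the
vertices where it vanishes. -/
lemma hull_face_subset {S : Set (E n)} {w : E n} {b : ℝ} (h : ∀ s ∈ S, ⟪w, s⟫ + b ≤ 0) :
    ∀ x ∈ convexHull ℝ S, ⟪w, x⟫ + b = 0 → x ∈ convexHull ℝ {s ∈ S | ⟪w, s⟫ + b = 0} := by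
  intro x hx hxe
  rw [convexHull_eq] at hx
  obtain ⟨ι, t, f, z, hf0, hf1, hzS, hx⟩ := hx
  rw [Finset.centerMass_eq_of_sum_1 _ _ hf1] at hx
  have hval : ∀ i ∈ t, f i * (⟪w, z i⟫ + b) ≤ 0 := fun i hi =>
    mul_nonpos_of_nonneg_of_nonpos (hf0 i hi) (h _ (hzS i hi))
  have hsum : ∑ i ∈ t, f i * (⟪w, z i⟫ + b) = 0 := by
    have : ⟪w, x⟫ = ∑ i ∈ t, f i * ⟪w, z i⟫ := by
      rw [← hx, inner_sum]
      exact Finset.sum_congr rfl fun i _ => real_inner_smul_right w (z i) (f i)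
    calc ∑ i ∈ t, f i * (⟪w, z i⟫ + b) = (∑ i ∈ t, f i * ⟪w, z i⟫) + (∑ i ∈ t, f i) * b := by
          rw [Finset.sum_mul]; rw [← Finset.sum_add_distrib]
          exact Finset.sum_congr rfl fun i _ => by ring
      _ = ⟪w, x⟫ + b := by rw [this, hf1, one_mul]
      _ = 0 := hxe
  have hzero : ∀ i ∈ t, f i * (⟪w, z i⟫ + b) = 0 :=
    (Finset.sum_eq_zero_iff_of_nonpos hval).1 hsum
  -- restrict to nonzero weights
  have hx' : (t.filter fun i => f i ≠ 0).centerMass f z = x := by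
    rw [Finset.centerMass_filter_ne_zero, Finset.centerMass_eq_of_sum_1 _ _ hf1, hx]
  rw [← hx']
  apply Finset.centerMass_mem_convexHull
  · intro i hi; exact hf0 i (Finset.mem_filter.1 hi).1
  · rw [Finset.sum_filter_ne_zero, hf1]; exact one_pos
  · intro i hi
    rw [Finset.mem_filter] at hi
    obtain ⟨hit, hfne⟩ := hi
    refine ⟨hzS i hit, ?_⟩
    have := hzero i hit
    rcases mul_eq_zero.1 this with h1 | h2
    · exact absurd h1 hfne
    · exact h2

/-- A face of a convex hull is the hull of the generators it contains. -/
lemma face_hull_eq {S : Set (E n)} {F : Set (E n)} (hF : IsFace (convexHull ℝ S) F) :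
    F = convexHull ℝ (S ∩ F) := by
  rcases hF with rfl | rfl | ⟨w, b, ⟨hw, hle, hex⟩, rfl⟩
  · simp
  · rw [inter_eq_left.2 (subset_convexHull ℝ S)]
  · have hle' : ∀ s ∈ S, ⟪w, s⟫ + b ≤ 0 := fun s hs => hle s (subset_convexHull ℝ S hs)
    apply Subset.antisymm
    · intro x ⟨hx, hxe⟩
      refine convexHull_mono ?_ (hull_face_subset hle' x hx hxe)
      rintro s ⟨hs, hse⟩
      exact ⟨hs, subset_convexHull ℝ S hs, hse⟩
    · apply convexHull_min
      · rintro s ⟨hs, hsF⟩; exact hsF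
      · exact (convex_convexHull ℝ S).inter (hyperplane_convex w b)

/-- Choice of a small enough ε for the face-of-face perturbation argument. -/
lemma exists_eps {α : Type*} (t : Finset α) (lam mu : α → ℝ) :
    ∃ ε : ℝ, 0 < ε ∧ ∀ s ∈ t, lam s < 0 → lam s + ε * mu s < 0 := by
  classical
  induction t using Finset.induction_on with
  | empty => exact ⟨1, one_pos, by simp⟩
  | @insert a t' hnotmem ih =>
    obtain ⟨ε, hε, hεs⟩ := ih
    by_cases hmu : mu a ≤ 0
    · refine ⟨ε, hε, ?_⟩
      intro s hs hlam
      rcases Finset.mem_insert.1 hs with rfl | hs'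
      · nlinarith
      · exact hεs s hs' hlam
    · push_neg at hmu
      by_cases hla : lam a < 0
      · refine ⟨min ε (-lam a / (2 * mu a)), lt_min hε (div_pos (by linarith) (by linarith)), ?_⟩
        intro s hs hlam
        rcases Finset.mem_insert.1 hs with rfl | hs'
        · have h1 : min ε (-lam s / (2 * mu s)) ≤ -lam s / (2 * mu s) := min_le_right _ _
          have h2 : min ε (-lam s / (2 * mu s)) * mu s ≤ (-lam s / (2 * mu s)) * mu s :=
            mul_le_mul_of_nonneg_right h1 hmu.le
          have h3 : (-lam s / (2 * mu s)) * mu s = -lam s / 2 := by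
            field_simp
          nlinarith
        · have := hεs s hs' hlam
          have hmin : min ε (-lam a / (2 * mu a)) ≤ ε := min_le_left _ _
          by_cases hms : 0 ≤ mu s
          · nlinarith
          · push_neg at hms
            have : 0 < min ε (-lam a / (2 * mu a)) := lt_min hε (div_pos (by linarith) (by linarith))
            nlinarith
      · refine ⟨ε, hε, ?_⟩
        intro s hs hlam
        rcases Finset.mem_insert.1 hs with rfl | hs'
        · exact absurd hlam hla
        · exact hεs s hs' hlam

/-- Face of a face of a polytope is a face of the polytope. -/
lemma face_trans_polytope {S : Set (E n)} (hS : S.Finite) {F G : Set (E n)}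
    (hF : IsFace (convexHull ℝ S) F) (hG : IsFace F G) : IsFace (convexHull ℝ S) G := by
  classical
  set K := convexHull ℝ S with hK
  rcases hG with rfl | rfl | ⟨u, c, ⟨hu, hule, huex⟩, rfl⟩
  · left; rfl
  · exact hF
  · rcases hF with rfl | rfl | ⟨w, b, ⟨hw, hwle, hwex⟩, rfl⟩
    · obtain ⟨x, hx, _⟩ := huex; exact absurd hx (notMem_empty x)
    · right; right; exact ⟨u, c, ⟨hu, hule, huex⟩, rfl⟩
    · -- main case
      set F := {x ∈ K | ⟪w, x⟫ + b = 0} with hFdef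
      set lam : E n → ℝ := fun x => ⟪w, x⟫ + b with hlam
      set mu : E n → ℝ := fun x => ⟪u, x⟫ + c with hmu
      obtain ⟨ε, hε, hεs⟩ := exists_eps hS.toFinset lam mu
      have hSle : ∀ s ∈ S, lam s ≤ 0 := fun s hs => hwle s (subset_convexHull ℝ S hs)
      -- the perturbed functional
      set nu : E n → ℝ := fun x => ⟪w + ε • u, x⟫ + (b + ε * c) with hnu
      have hnueq : ∀ x, nu x = lam x + ε * mu x := by
        intro x
        simp only [hnu, hlam, hmu, inner_add_left, real_inner_smul_left]
        ring
      have hnuS : ∀ s ∈ S, nu s ≤ 0 := by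
        intro s hs
        rw [hnueq]
        rcases lt_or_eq_of_le (hSle s hs) with hlt | heq
        · exact (hεs s (hS.mem_toFinset.2 hs) hlt).le
        · have hsF : s ∈ F := ⟨subset_convexHull ℝ S hs, heq⟩
          have : mu s ≤ 0 := hule s hsF
          rw [← heq]; nlinarith
      have hnuK : ∀ x ∈ K, nu x ≤ 0 := by
        intro x hx
        exact hull_le (w := w + ε • u) (b := b + ε * c) hnuS x hx
      have hGeq : {x ∈ K | nu x = 0} = {x ∈ F | mu x = 0} := by
        apply Subset.antisymm
        · intro x ⟨hxK, hxe⟩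
          have hmem := hull_face_subset (w := w + ε • u) (b := b + ε * c) hnuS x hxK hxe
          have hsub : {s ∈ S | ⟪w + ε • u, s⟫ + (b + ε * c) = 0} ⊆ {x ∈ F | mu x = 0} := by
            rintro s ⟨hsS, hse⟩
            have hse' : nu s = 0 := hse
            have hlams : lam s = 0 := by
              by_contra hne
              have hlt : lam s < 0 := lt_of_le_of_ne (hSle s hsS) hne
              have := hεs s (hS.mem_toFinset.2 hsS) hlt
              rw [hnueq] at hse'; linarith
            have hsF : s ∈ F := ⟨subset_convexHull ℝ S hsS, hlams⟩
            have hmus : mu s = 0 := by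
              rw [hnueq, hlams] at hse'; 
              have : ε * mu s = 0 := by linarith
              exact (mul_eq_zero.1 this).resolve_left (ne_of_gt hε)
            exact ⟨hsF, hmus⟩
          have hconv : Convex ℝ {x ∈ F | mu x = 0} := by
            have : {x ∈ F | mu x = 0} = (K ∩ {x | lam x = 0}) ∩ {x | mu x = 0} := by
              ext y; simp only [hFdef, mem_inter_iff, mem_setOf_eq, mem_sep_iff]; exact Iff.rfl
            rw [this]
            exact ((convex_convexHull ℝ S).inter (hyperplane_convex w b)).inter (hyperplane_convex u c)
          exact convexHull_min hsub hconv hmem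
        · rintro x ⟨hxF, hxe⟩
          refine ⟨hxF.1, ?_⟩
          have : lam x = 0 := hxF.2
          rw [hnueq, this, hxe]; ring
      have : {x ∈ F | ⟪u, x⟫ + c = 0} = {x ∈ K | ⟪w + ε • u, x⟫ + (b + ε * c) = 0} := by
        rw [← hGeq]
      rw [this]
      exact isFace_of_le _ _ hnuK

section Tight
variable {n m : ℕ} {w : Fin m → E n} {b : Fin m → ℝ}

/-- Any "tight subset" set is a face of the polyhedron. -/
lemma tight_isFace (w : Fin m → E n) (b : Fin m → ℝ) (I : Finset (Fin m)) :
    IsFace {x : E n | ∀ i, ⟪w i, x⟫ + b i ≤ 0}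
      {x ∈ {x : E n | ∀ i, ⟪w i, x⟫ + b i ≤ 0} | ∀ i ∈ I, ⟪w i, x⟫ + b i = 0} := by
  set P := {x : E n | ∀ i, ⟪w i, x⟫ + b i ≤ 0} with hP
  set W : E n := ∑ i ∈ I, w i with hW
  set B : ℝ := ∑ i ∈ I, b i with hB
  have hsum : ∀ x : E n, ⟪W, x⟫ + B = ∑ i ∈ I, (⟪w i, x⟫ + b i) := by
    intro x
    rw [hW, hB, sum_inner, Finset.sum_add_distrib]
  have hle : ∀ x ∈ P, ⟪W, x⟫ + B ≤ 0 := by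
    intro x hx
    rw [hsum]
    exact Finset.sum_nonpos fun i _ => hx i
  have heq : {x ∈ P | ⟪W, x⟫ + B = 0} = {x ∈ P | ∀ i ∈ I, ⟪w i, x⟫ + b i = 0} := by
    ext x
    simp only [mem_sep_iff, and_congr_right_iff]
    intro hx
    rw [hsum]
    exact Finset.sum_eq_zero_iff_of_nonpos (fun i _ => hx i)
  rw [← heq]
  exact isFace_of_le W B hle

/-- The affine evaluation of a point moved along `z - y`. -/
lemma aff_move (u : E n) (c t : ℝ) (z y : E n) :
    ⟪u, z + t • (z - y)⟫ + c = (1 + t) * (⟪u, z⟫ + c) - t * (⟪u, y⟫ + c) := by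
  rw [inner_add_right, real_inner_smul_right, inner_sub_right]
  ring

/-- Every nonempty face of a polyhedron is a tight subset set. -/
lemma face_tight {F : Set (E n)}
    (hF : IsFace {x : E n | ∀ i, ⟪w i, x⟫ + b i ≤ 0} F) (hne : F.Nonempty) :
    ∃ I : Finset (Fin m), F = {x ∈ {x : E n | ∀ i, ⟪w i, x⟫ + b i ≤ 0} |
      ∀ i ∈ I, ⟪w i, x⟫ + b i = 0} := by
  classical
  set P := {x : E n | ∀ i, ⟪w i, x⟫ + b i ≤ 0} with hP
  rcases hF with rfl | rfl | ⟨u, c, ⟨hu, hule, huex⟩, rfl⟩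
  · exact absurd hne (by simp)
  · refine ⟨∅, ?_⟩
    ext x; simp
  · set F := {x ∈ P | ⟪u, x⟫ + c = 0} with hFdef
    set I : Finset (Fin m) := Finset.univ.filter (fun i => ∀ x ∈ F, ⟪w i, x⟫ + b i = 0) with hI
    refine ⟨I, ?_⟩
    have hItight : ∀ i ∈ I, ∀ x ∈ F, ⟪w i, x⟫ + b i = 0 := by
      intro i hi
      exact (Finset.mem_filter.1 hi).2
    -- pick witnesses for non-tight constraints
    obtain ⟨x₀, hx₀⟩ := hne
    have hwit : ∀ i : Fin m, ∃ y ∈ F, i ∉ I → ⟪w i, y⟫ + b i < 0 := by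
      intro i
      by_cases hi : i ∈ I
      · exact ⟨x₀, hx₀, fun h => absurd hi h⟩
      · rw [hI, Finset.mem_filter] at hi
        push_neg at hi
        obtain ⟨y, hyF, hyne⟩ := hi (Finset.mem_univ i)
        exact ⟨y, hyF, fun _ => lt_of_le_of_ne (hyF.1 i) hyne⟩
    choose y hyF hylt using hwit
    -- the interior-ish point z
    set z : E n := ((m : ℝ) + 1)⁻¹ • (x₀ + ∑ i, y i) with hz
    have hm1 : (0:ℝ) < (m : ℝ) + 1 := by positivity
    have hFconv : Convex ℝ F := (IsPolyhedral.convex ⟨m, w, b, rfl⟩).inter (hyperplane_convex u c)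
    have hzF : z ∈ F := by
      have : z = Finset.univ.centerMass (fun _ : Fin (m+1) => (1:ℝ)) (Fin.cons x₀ y) := by
        rw [Finset.centerMass]
        simp only [Finset.sum_const, Finset.card_univ, Fintype.card_fin, nsmul_eq_mul, mul_one,
          one_smul, Fin.sum_cons, hz]
        norm_num
      rw [this, ← hFconv.convexHull_eq]
      apply Finset.centerMass_mem_convexHull
      · intro i _; norm_num
      · simp only [Finset.sum_const, Finset.card_univ, Fintype.card_fin, nsmul_eq_mul, mul_one]
        positivity
      · intro i _
        refine Fin.cases ?_ ?_ i
        · exact hx₀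
        · intro j; exact hyF j
    -- evaluation of constraints at z
    have hzeval : ∀ (v : E n) (c' : ℝ),
        ⟪v, z⟫ + c' = ((m : ℝ) + 1)⁻¹ * ((⟪v, x₀⟫ + c') + ∑ i, (⟪v, y i⟫ + c')) := by
      intro v c'
      rw [hz, real_inner_smul_right, inner_add_right, inner_sum, Finset.sum_add_distrib]
      have : (∑ _i : Fin m, c') = (m : ℝ) * c' := by
        simp [Finset.sum_const, Finset.card_univ]
      rw [this]
      field_simp
      ring
    have hzlt : ∀ i : Fin m, i ∉ I → ⟪w i, z⟫ + b i < 0 := by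
      intro i hi
      rw [hzeval]
      have h1 : ⟪w i, x₀⟫ + b i ≤ 0 := hx₀.1 i
      have h2 : ∑ j, (⟪w i, y j⟫ + b i) ≤ ⟪w i, y i⟫ + b i := by
        rw [← Finset.add_sum_erase _ _ (Finset.mem_univ i)]
        have : ∑ j ∈ Finset.univ.erase i, (⟪w i, y j⟫ + b i) ≤ 0 :=
          Finset.sum_nonpos fun j _ => (hyF j).1 i
        linarith
      have h3 : ⟪w i, y i⟫ + b i < 0 := hylt i hi
      have : (⟪w i, x₀⟫ + b i) + ∑ j, (⟪w i, y j⟫ + b i) < 0 := by linarith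
      have hinv : (0:ℝ) < ((m:ℝ)+1)⁻¹ := by positivity
      nlinarith
    -- the set equality
    apply Subset.antisymm
    · intro x hxF
      exact ⟨hxF.1, fun i hi => hItight i hi x hxF⟩
    · rintro p ⟨hpP, hptight⟩
      by_contra hpF
      have hgp : ⟪u, p⟫ + c < 0 := lt_of_le_of_ne (hule p hpP) (fun h => hpF ⟨hpP, h⟩)
      -- move from z away from p
      obtain ⟨t, ht, hts⟩ := exists_eps (Finset.univ \ I) (fun j => ⟪w j, z⟫ + b j)
        (fun j => (⟪w j, z⟫ + b j) - (⟪w j, p⟫ + b j))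
      set zt := z + t • (z - p) with hzt
      have hztP : zt ∈ P := by
        intro j
        rw [aff_move]
        by_cases hj : j ∈ I
        · have h1 : ⟪w j, z⟫ + b j = 0 := hItight j hj z hzF
          have h2 : ⟪w j, p⟫ + b j = 0 := hptight j hj
          rw [h1, h2]; ring_nf; exact le_refl 0
        · have hjm : j ∈ Finset.univ \ I := Finset.mem_sdiff.2 ⟨Finset.mem_univ j, hj⟩
          have := hts j hjm (hzlt j hj)
          nlinarith [hzlt j hj]
      have : ⟪u, zt⟫ + c ≤ 0 := hule zt hztP
      rw [aff_move] at this
      have hgz : ⟪u, z⟫ + c = 0 := hzF.2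
      rw [hgz] at this
      nlinarith
end Tight

section FaceTrans
variable {n : ℕ}

/-- Face of a face of a polyhedron is a face. -/
lemma face_trans_polyhedral {C F G : Set (E n)} (hC : IsPolyhedral C)
    (hF : IsFace C F) (hG : IsFace F G) : IsFace C G := by
  classical
  rcases eq_empty_or_nonempty G with rfl | hGne
  · left; rfl
  have hFne : F.Nonempty := hGne.mono hG.subset
  obtain ⟨m, w, b, rfl⟩ := hC
  obtain ⟨I, hFI⟩ := face_tight hF hFne
  set P := {x : E n | ∀ i, ⟪w i, x⟫ + b i ≤ 0} with hP
  -- a polyhedral representation of F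
  set w' : Fin (m + m) → E n := Fin.addCases w (fun i => if i ∈ I then -w i else w i) with hw'
  set b' : Fin (m + m) → ℝ := Fin.addCases b (fun i => if i ∈ I then -b i else b i) with hb'
  have hFrep : F = {x : E n | ∀ j, ⟪w' j, x⟫ + b' j ≤ 0} := by
    rw [hFI]
    ext x
    simp only [mem_sep_iff, mem_setOf_eq, hP]
    constructor
    · rintro ⟨hx, htight⟩ j
      refine Fin.addCases (motive := fun j => ⟪w' j, x⟫ + b' j ≤ 0) ?_ ?_ j
      · intro i
        simp only [hw', hb', Fin.addCases_left]
        exact hx i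
      · intro i
        simp only [hw', hb', Fin.addCases_right]
        by_cases hi : i ∈ I
        · simp only [hi, if_true, inner_neg_left]
          have := htight i hi
          linarith
        · simp only [hi, if_false]
          exact hx i
    · intro hx
      constructor
      · intro i
        have := hx (Fin.castAdd m i)
        simpa only [hw', hb', Fin.addCases_left] using this
      · intro i hi
        have h1 := hx (Fin.castAdd m i)
        have h2 := hx (Fin.natAdd m i)
        simp only [hw', hb', Fin.addCases_left, Fin.addCases_right, hi, if_true,
          inner_neg_left] at h1 h2
        linarith
  rw [hFrep] at hG
  obtain ⟨T, hGT⟩ := face_tight hG hGne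
  set J : Finset (Fin m) := I ∪ Finset.univ.filter
    (fun i : Fin m => Fin.castAdd m i ∈ T ∨ Fin.natAdd m i ∈ T) with hJ
  have hGeq : G = {x ∈ P | ∀ i ∈ J, ⟪w i, x⟫ + b i = 0} := by
    rw [hGT, ← hFrep, hFI]
    ext x
    simp only [mem_sep_iff, mem_setOf_eq]
    constructor
    · rintro ⟨⟨hxP, hxI⟩, hxT⟩
      refine ⟨hxP, ?_⟩
      intro i hi
      rw [hJ, Finset.mem_union] at hi
      rcases hi with hi | hi
      · exact hxI i hi
      · rw [Finset.mem_filter] at hi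
        rcases hi.2 with hcast | hnat
        · have := hxT _ hcast
          simpa only [hw', hb', Fin.addCases_left] using this
        · have := hxT _ hnat
          by_cases hiI : i ∈ I
          · exact hxI i hiI
          · simp only [hw', hb', Fin.addCases_right, hiI, if_false] at this
            exact this
    · rintro ⟨hxP, hxJ⟩
      have hIJ : ∀ i ∈ I, ⟪w i, x⟫ + b i = 0 := fun i hi =>
        hxJ i (by rw [hJ]; exact Finset.mem_union_left _ hi)
      refine ⟨⟨hxP, hIJ⟩, ?_⟩
      intro j hj
      refine Fin.addCases (motive := fun j => j ∈ T → ⟪w' j, x⟫ + b' j = 0) ?_ ?_ j hj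
      · intro i hiT
        simp only [hw', hb', Fin.addCases_left]
        exact hxJ i (by
          rw [hJ]
          exact Finset.mem_union_right _ (Finset.mem_filter.2 ⟨Finset.mem_univ _, Or.inl hiT⟩))
      · intro i hiT
        simp only [hw', hb', Fin.addCases_right]
        by_cases hiI : i ∈ I
        · simp only [hiI, if_true, inner_neg_left]
          have := hIJ i hiI
          linarith
        · simp only [hiI, if_false]
          exact hxJ i (by
            rw [hJ]
            exact Finset.mem_union_right _ (Finset.mem_filter.2 ⟨Finset.mem_univ _, Or.inr hiT⟩))
  rw [hGeq]
  exact tight_isFace w b J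

/-- The vertex set of a polyhedron is finite. -/
lemma vert_finite {P : Set (E n)} (hP : IsPolyhedral P) : {v | IsVertex P v}.Finite := by
  classical
  obtain ⟨m, w, b, rfl⟩ := hP
  set Q := {x : E n | ∀ i, ⟪w i, x⟫ + b i ≤ 0} with hQ
  have hchoice : ∀ v ∈ {v : E n | IsVertex Q v}, ∃ I : Finset (Fin m),
      ({v} : Set (E n)) = {x ∈ Q | ∀ i ∈ I, ⟪w i, x⟫ + b i = 0} :=
    fun v hv => face_tight hv (singleton_nonempty v)
  choose! f hf using hchoice
  apply Set.Finite.of_finite_image (f := f)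
  · exact Set.toFinite _
  · intro v hv u hu hvu
    have h1 := hf v hv
    have h2 := hf u hu
    rw [hvu, ← h2] at h1
    exact (singleton_eq_singleton_iff.1 h1)

/-- A vertex of `C` lying in a face of `C` is a vertex of that face. -/
lemma vertex_mem_face {C F : Set (E n)} {v : E n} (hF : IsFace C F)
    (hv : IsVertex C v) (hvF : v ∈ F) : IsVertex F v := by
  rcases hv with h | h | ⟨u, c, ⟨hu, hule, huex⟩, h⟩
  · exact absurd h (by simp)
  · have hsub : F ⊆ {v} := h ▸ hF.subset
    have : F = {v} := Subset.antisymm hsub (singleton_subset_iff.2 hvF)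
    right; left; exact this.symm
  · have hle : ∀ x ∈ F, ⟪u, x⟫ + c ≤ 0 := fun x hx => hule x (hF.subset hx)
    have hveq : ⟪u, v⟫ + c = 0 := by
      have : v ∈ {x ∈ C | ⟪u, x⟫ + c = 0} := h ▸ rfl
      exact this.2
    have : {x ∈ F | ⟪u, x⟫ + c = 0} = {v} := by
      apply Subset.antisymm
      · rintro x ⟨hxF, hxe⟩
        have : x ∈ {x ∈ C | ⟪u, x⟫ + c = 0} := ⟨hF.subset hxF, hxe⟩
        rw [← h] at this
        exact this
      · exact singleton_subset_iff.2 ⟨hvF, hveq⟩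
    have hface := isFace_of_le u c hle
    rw [this] at hface
    exact hface

/-- Vertices of a face of a polyhedron are exactly the vertices of the polyhedron
lying in the face. -/
lemma vert_face_eq {C F : Set (E n)} (hC : IsPolyhedral C) (hF : IsFace C F) :
    {v | IsVertex F v} = {v | IsVertex C v} ∩ F := by
  ext v
  constructor
  · intro hv
    exact ⟨face_trans_polyhedral hC hF hv, (IsFace.subset hv) rfl⟩
  · rintro ⟨hv, hvF⟩
    exact vertex_mem_face hF hv hvF
end FaceTrans

section Assembly
variable {n : ℕ}

lemma Kpart_subset_s11 {C : Set (E n)} (hC : IsPolyhedral C) : Kpart C ⊆ C := by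
  apply convexHull_min _ hC.convex
  intro v hv
  exact (IsFace.subset hv) rfl

/-- A nonempty face always has a (possibly trivial) exposing representation. -/
lemma face_rep {C F : Set (E n)} (hF : IsFace C F) (hne : F.Nonempty) :
    ∃ w b, (∀ x ∈ C, ⟪w, x⟫ + b ≤ 0) ∧ F = {x ∈ C | ⟪w, x⟫ + b = 0} := by
  rcases hF with rfl | rfl | ⟨w, b, ⟨hw, hle, hex⟩, rfl⟩
  · exact absurd hne (by simp)
  · refine ⟨0, 0, by simp, ?_⟩
    ext x; simp
  · exact ⟨w, b, hle, rfl⟩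

/-- Two faces of the same set: their intersection is a face of each. -/
lemma inter_face {K F G : Set (E n)} (hF : IsFace K F) (hG : IsFace K G) :
    IsFace F (F ∩ G) := by
  rcases hG with rfl | rfl | ⟨u, c, ⟨hu, hule, huex⟩, rfl⟩
  · left; exact inter_empty F
  · right; left; exact inter_eq_left.2 hF.subset
  · have heq : F ∩ {x ∈ K | ⟪u, x⟫ + c = 0} = {x ∈ F | ⟪u, x⟫ + c = 0} := by
      ext x
      simp only [mem_inter_iff, mem_sep_iff]
      exact ⟨fun ⟨h1, _, h3⟩ => ⟨h1, h3⟩, fun ⟨h1, h2⟩ => ⟨h1, hF.subset h1, h2⟩⟩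
    rw [heq]
    exact isFace_of_le u c fun x hx => hule x (hF.subset hx)

/-- A face of `Kpart C` contained in a face `Ecell` of `C` is a face of `Kpart Ecell`. -/
lemma faceK_transfer {C Ecell F : Set (E n)} (hC : IsPolyhedral C) (hE : IsFace C Ecell)
    (hF : IsFace (Kpart C) F) (hFsub : F ⊆ Ecell) : IsFace (Kpart Ecell) F := by
  have hvert : {v | IsVertex Ecell v} = {v | IsVertex C v} ∩ Ecell := vert_face_eq hC hE
  have hmono : Kpart Ecell ⊆ Kpart C := by
    apply convexHull_mono
    rw [hvert]; exact inter_subset_left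
  have hFhull : F = convexHull ℝ ({v | IsVertex C v} ∩ F) := face_hull_eq hF
  rcases hF with rfl | rfl | ⟨w, b, ⟨hw, hle, hex⟩, rfl⟩
  · left; rfl
  · have hsubE : {v | IsVertex C v} ⊆ Ecell :=
      fun v hv => hFsub (subset_convexHull ℝ _ hv)
    have : {v | IsVertex Ecell v} = {v | IsVertex C v} := by
      rw [hvert, inter_eq_left.2 hsubE]
    right; left
    unfold Kpart
    rw [this]
  · set F := {x ∈ Kpart C | ⟪w, x⟫ + b = 0} with hFdef
    have hFsubKE : F ⊆ Kpart Ecell := by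
      rw [hFhull]
      apply convexHull_min _ (convex_convexHull ℝ _)
      rintro v ⟨hvC, hvF⟩
      apply subset_convexHull ℝ _
      rw [hvert]
      exact ⟨hvC, hFsub hvF⟩
    have heq : {x ∈ Kpart Ecell | ⟪w, x⟫ + b = 0} = F := by
      apply Subset.antisymm
      · rintro x ⟨hx, hxe⟩
        exact ⟨hmono hx, hxe⟩
      · rintro x hx
        exact ⟨hFsubKE hx, hx.2⟩
    rw [← heq]
    exact isFace_of_le w b fun x hx => hle x (hmono hx)

/-- The key lemma: faces of the `Kpart`s of two cells intersect in a face. -/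
lemma main_aux {cells : Set (Set (E n))} (hcx : IsPolyComplex cells)
    {C D A B : Set (E n)} (hC : C ∈ cells) (hD : D ∈ cells)
    (hA : IsFace (Kpart C) A) (hB : IsFace (Kpart D) B) : IsFace A (A ∩ B) := by
  obtain ⟨hfin, hpoly, hfaces, hinter⟩ := hcx
  have hCp : IsPolyhedral C := (hpoly C hC).1
  have hDp : IsPolyhedral D := (hpoly D hD).1
  rcases eq_empty_or_nonempty (A ∩ B) with hAB | hABne
  · rw [hAB]; left; rfl
  have hKCsub : Kpart C ⊆ C := Kpart_subset_s11 hCp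
  have hKDsub : Kpart D ⊆ D := Kpart_subset_s11 hDp
  have hasubC : A ⊆ C := fun x hx => hKCsub (hA.subset hx)
  have hbsubD : B ⊆ D := fun x hx => hKDsub (hB.subset hx)
  have hABsubE : A ∩ B ⊆ C ∩ D := fun x ⟨hx1, hx2⟩ => ⟨hasubC hx1, hbsubD hx2⟩
  have hEne : (C ∩ D).Nonempty := hABne.mono hABsubE
  obtain ⟨hEfaceC, hEfaceD⟩ := hinter C hC D hD
  have hEcell : (C ∩ D) ∈ cells := hfaces C hC (C ∩ D) hEfaceC hEne
  obtain ⟨w, b, hwle, hwEeq⟩ := face_rep hEfaceC hEne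
  obtain ⟨w', b', hw'le, hw'Eeq⟩ := face_rep hEfaceD hEne
  -- the auxiliary faces F and G
  set F := {x ∈ A | ⟪w, x⟫ + b = 0} with hFdef
  set G := {x ∈ B | ⟪w', x⟫ + b' = 0} with hGdef
  have hFA : IsFace A F := isFace_of_le w b fun x hx => hwle x (hasubC hx)
  have hGB : IsFace B G := isFace_of_le w' b' fun x hx => hw'le x (hbsubD hx)
  have hFKC : IsFace (Kpart C) F := face_trans_polytope (vert_finite hCp) hA hFA
  have hGKD : IsFace (Kpart D) G := face_trans_polytope (vert_finite hDp) hB hGB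
  have hFsubE : F ⊆ C ∩ D := by
    rintro x ⟨hxA, hxe⟩
    rw [hwEeq]
    exact ⟨hasubC hxA, hxe⟩
  have hGsubE : G ⊆ C ∩ D := by
    rintro x ⟨hxB, hxe⟩
    rw [hw'Eeq]
    exact ⟨hbsubD hxB, hxe⟩
  have hFKE : IsFace (Kpart (C ∩ D)) F := faceK_transfer hCp hEfaceC hFKC hFsubE
  have hGKE : IsFace (Kpart (C ∩ D)) G := faceK_transfer hDp hEfaceD hGKD hGsubE
  have hABFG : A ∩ B = F ∩ G := by
    apply Subset.antisymm
    · intro x hx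
      have hxE := hABsubE hx
      have he1 : ⟪w, x⟫ + b = 0 := by
        have : x ∈ {y ∈ C | ⟪w, y⟫ + b = 0} := hwEeq ▸ hxE
        exact this.2
      have he2 : ⟪w', x⟫ + b' = 0 := by
        have : x ∈ {y ∈ D | ⟪w', y⟫ + b' = 0} := hw'Eeq ▸ hxE
        exact this.2
      exact ⟨⟨hx.1, he1⟩, ⟨hx.2, he2⟩⟩
    · rintro x ⟨hxF, hxG⟩
      exact ⟨hxF.1, hxG.1⟩
  have hFG : IsFace F (F ∩ G) := inter_face hFKE hGKE
  -- A is itself the hull of a finite set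
  have hAhull : A = convexHull ℝ ({v | IsVertex C v} ∩ A) := face_hull_eq hA
  have hSA : ({v | IsVertex C v} ∩ A).Finite := (vert_finite hCp).subset inter_subset_left
  rw [hABFG]
  have hFA' : IsFace (convexHull ℝ ({v | IsVertex C v} ∩ A)) F := hAhull ▸ hFA
  have := face_trans_polytope hSA hFA' hFG
  rw [← hAhull] at this
  exact this
end Assembly


/-- The compact part of a pointed polyhedral complex is a polytopal complex: it is
closed under taking faces, any two of its polytopes intersect in a common face,
and all its cells are bounded. -/
theorem compactPart_is_polytopal_complex {n : ℕ} (cells : Set (Set (E n)))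
    (hcx : IsPolyComplex cells) (hptd : ∀ C ∈ cells, IsPointed C) :
    (∀ A ∈ compactPartCells cells, ∀ G, IsFace A G → G.Nonempty →
        G ∈ compactPartCells cells) ∧
    (∀ A ∈ compactPartCells cells, ∀ B ∈ compactPartCells cells,
        IsFace A (A ∩ B) ∧ IsFace B (A ∩ B)) ∧
    (∀ A ∈ compactPartCells cells, Bornology.IsBounded A) := by
  refine ⟨?_, ?_, ?_⟩
  · rintro A ⟨hAne, C, hC, hA⟩ G hG hGne
    refine ⟨hGne, C, hC, ?_⟩
    exact face_trans_polytope (vert_finite (hcx.2.1 C hC).1) hA hG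
  · rintro A ⟨hAne, C, hC, hA⟩ B ⟨hBne, D, hD, hB⟩
    constructor
    · exact main_aux hcx hC hD hA hB
    · rw [inter_comm]
      exact main_aux hcx hD hC hB hA
  · rintro A ⟨hAne, C, hC, hA⟩
    have hvfin : {v | IsVertex C v}.Finite := vert_finite (hcx.2.1 C hC).1
    have hKb : Bornology.IsBounded (Kpart C) :=
      isBounded_convexHull.2 hvfin.isBounded
    exact hKb.subset hA.subset
end Basic
end
end
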